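/- Let f : C → ℝ be convex on a convex set C in a real vector space, x₁,...,xₙ ∈ C, and p, q be nonnegative n-tuples with ∑pᵢ = ∑qᵢ = 1 and qᵢ > 0 for all i. Let m = min_i (pᵢ/qᵢ) and M = max_i (pᵢ/qᵢ). Then M·(∑qᵢf(xᵢ) − f(∑qᵢxᵢ)) ≥ ∑pᵢf(xᵢ) − f(∑pᵢxᵢ) ≥ m·(∑qᵢf(xᵢ) − f(∑qᵢxᵢ)). -/

import Mathlib

theorem stmt0 {E : Type*} [AddCommGroup E] [Module ℝ E] {C : Set E} {f : E → ℝ}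
    (hf : ConvexOn ℝ C f) {n : ℕ} (hn : 0 < n) (x : Fin n → E) (hx : ∀ i, x i ∈ C)
    (p q : Fin n → ℝ) (hp : ∀ i, 0 ≤ p i) (hq : ∀ i, 0 < q i)
    (hp1 : ∑ i, p i = 1) (hq1 : ∑ i, q i = 1)
    (m M : ℝ) (hm : IsLeast (Set.range fun i => p i / q i) m)
    (hM : IsGreatest (Set.range fun i => p i / q i) M) :
    M * (∑ i, q i * f (x i) - f (∑ i, q i • x i)) ≥
        ∑ i, p i * f (x i) - f (∑ i, p i • x i) ∧
    ∑ i, p i * f (x i) - f (∑ i, p i • x i) ≥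
        m * (∑ i, q i * f (x i) - f (∑ i, q i • x i)) := by
  obtain ⟨⟨i₀, hi₀⟩, hmub⟩ := hm
  obtain ⟨⟨i₁, hi₁⟩, hMub⟩ := hM
  have hm0 : 0 ≤ m := hi₀ ▸ div_nonneg (hp i₀) (hq i₀).le
  have hmq : ∀ i, m * q i ≤ p i := fun i =>
    (le_div_iff₀ (hq i)).mp (hmub ⟨i, rfl⟩)
  have hMq : ∀ i, p i ≤ M * q i := fun i =>
    (div_le_iff₀ (hq i)).mp (hMub ⟨i, rfl⟩)
  have hM1 : 1 ≤ M := by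
    calc 1 = ∑ i, p i := hp1.symm
    _ ≤ ∑ i, M * q i := Finset.sum_le_sum fun i _ => hMq i
    _ = M := by rw [← Finset.mul_sum, hq1, mul_one]
  have hm1 : m ≤ 1 := by
    calc m = ∑ i, m * q i := by rw [← Finset.mul_sum, hq1, mul_one]
    _ ≤ ∑ i, p i := Finset.sum_le_sum fun i _ => hmq i
    _ = 1 := hp1
  have hM0 : 0 < M := lt_of_lt_of_le one_pos hM1
  have hqx : (∑ i, q i • x i) ∈ C :=
    hf.1.sum_mem (fun i _ => (hq i).le) hq1 (fun i _ => hx i)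
  have hpx : (∑ i, p i • x i) ∈ C :=
    hf.1.sum_mem (fun i _ => hp i) hp1 (fun i _ => hx i)
  -- lower bound
  have key1 : f (∑ i, p i • x i) ≤
      ∑ i, (p i - m * q i) * f (x i) + m * f (∑ i, q i • x i) := by
    have h := hf.map_sum_le (t := Finset.univ)
      (w := Fin.snoc (fun i => p i - m * q i) m)
      (p := Fin.snoc x (∑ i, q i • x i))
      (by
        intro i _
        induction i using Fin.lastCases with
        | last => simpa using hm0
        | cast i => simpa using sub_nonneg.mpr (hmq i))
      (by simp [Fin.sum_univ_castSucc, Finset.sum_sub_distrib, hp1,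
            ← Finset.mul_sum, hq1])
      (by
        intro i _
        induction i using Fin.lastCases with
        | last => simpa using hqx
        | cast i => simpa using hx i)
    simp only [Fin.sum_univ_castSucc, Fin.snoc_castSucc, Fin.snoc_last] at h
    have heq : (∑ i : Fin n, (p i - m * q i) • x i) + m • (∑ i, q i • x i)
        = ∑ i, p i • x i := by
      rw [Finset.smul_sum]
      rw [← Finset.sum_add_distrib]
      congr 1; funext i
      rw [sub_smul, smul_smul]
      abel
    rwa [heq] at h
  have key2 : M * f (∑ i, q i • x i) ≤
      ∑ i, (M * q i - p i) * f (x i) + f (∑ i, p i • x i) := by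
    have h := hf.map_sum_le (t := Finset.univ)
      (w := Fin.snoc (fun i => (M * q i - p i) / M) (1 / M))
      (p := Fin.snoc x (∑ i, p i • x i))
      (by
        intro i _
        induction i using Fin.lastCases with
        | last => simpa using (one_div_pos.mpr hM0).le
        | cast i =>
          simpa using div_nonneg (sub_nonneg.mpr (hMq i)) hM0.le)
      (by
        simp only [Fin.sum_univ_castSucc, Fin.snoc_castSucc, Fin.snoc_last]
        rw [← Finset.sum_div, Finset.sum_sub_distrib, ← Finset.mul_sum, hq1, hp1]
        field_simp
        ring)
      (by
        intro i _
        induction i using Fin.lastCases with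
        | last => simpa using hpx
        | cast i => simpa using hx i)
    simp only [Fin.sum_univ_castSucc, Fin.snoc_castSucc, Fin.snoc_last] at h
    have heq : (∑ i : Fin n, ((M * q i - p i) / M) • x i)
        + (1 / M) • (∑ i, p i • x i) = ∑ i, q i • x i := by
      rw [Finset.smul_sum, ← Finset.sum_add_distrib]
      congr 1; funext i
      rw [smul_smul, ← add_smul]
      congr 1
      field_simp
      ring
    rw [heq] at h
    have h' := mul_le_mul_of_nonneg_left h hM0.le
    calc M * f (∑ i, q i • x i) ≤
        M * (∑ i : Fin n, (M * q i - p i) / M * f (x i) + 1 / M * f (∑ i, p i • x i)) := h'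
      _ = ∑ i, (M * q i - p i) * f (x i) + f (∑ i, p i • x i) := by
          rw [mul_add, Finset.mul_sum]
          congr 1
          · apply Finset.sum_congr rfl
            intro i _
            field_simp
          · field_simp
  constructor
  · have : ∑ i : Fin n, (M * q i - p i) * f (x i)
        = M * ∑ i, q i * f (x i) - ∑ i, p i * f (x i) := by
      simp only [sub_mul, mul_assoc]
      rw [Finset.sum_sub_distrib, ← Finset.mul_sum]
    rw [this] at key2
    linarith
  · have : ∑ i : Fin n, (p i - m * q i) * f (x i)
        = ∑ i, p i * f (x i) - m * ∑ i, q i * f (x i) := by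
      simp only [sub_mul, mul_assoc]
      rw [Finset.sum_sub_distrib, ← Finset.mul_sum]
    rw [this] at key1
    linarith
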